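/- Let D ⊆ ℝ² be the closed unit disk centered at the origin and let 0 < l ≤ 2. Then the Buffon probability of D satisfies P_D(l) = (2/π)·(arccos(l/2) − (l/2)·√(1 − l²/4)). -/

import Mathlib

open MeasureTheory Metric Set Real Pointwise
open scoped ENNReal RealInnerProductSpace

noncomputable section

/-- The Euclidean plane. -/
abbrev Plane := EuclideanSpace ℝ (Fin 2)

/-- The unit vector in the plane making angle `θ` with the horizontal axis. -/
def needleDir (θ : ℝ) : Plane :=
  (EuclideanSpace.equiv (Fin 2) ℝ).symm ![Real.cos θ, Real.sin θ]

/-- The set of directions `θ ∈ [0, 2π)` for which the needle of length `l`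
originating at `x` has its other endpoint in `X`. -/
def needleAngles (X : Set Plane) (l : ℝ) (x : Plane) : Set ℝ :=
  {θ ∈ Set.Ico 0 (2 * π) | x + l • needleDir θ ∈ X}

/-- The pointwise probability `p_X(x, l)` that a random needle of length `l` at `x`
lies within `X`. -/
def pointwiseProb (X : Set Plane) (x : Plane) (l : ℝ) : ℝ :=
  (1 / (2 * π)) * (volume (needleAngles X l x)).toReal

/-- The Buffon probability `P_X(l)` that a random needle of length `l` originating at a
uniformly chosen point of `X` lies within `X`; taken to be `0` when `X` has zero area. -/
def buffonProb (X : Set Plane) (l : ℝ) : ℝ :=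
  if volume X = 0 then 0
  else (1 / (2 * π * (volume X).toReal)) *
    ∫ x in X, (volume (needleAngles X l x)).toReal

/-- The interior parallel `X_r`: the Minkowski difference of `X` with the closed ball
of radius `r`. -/
def innerParallel (X : Set Plane) (r : ℝ) : Set Plane :=
  {x : Plane | Metric.closedBall x r ⊆ X}

/-- The exterior parallel `X^r`: the Minkowski sum of `X` with the closed ball
of radius `r`. -/
def exterParallel (X : Set Plane) (r : ℝ) : Set Plane :=
  X + Metric.closedBall (0 : Plane) r

end

noncomputable section BuffonDiskAux

lemma sqrtFTC (a : ℝ) (h1 : -1 ≤ a) (h2 : a ≤ 1) :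
    ∫ s in a..1, Real.sqrt (1 - s^2) = (π/2 - Real.arcsin a - a * Real.sqrt (1 - a^2)) / 2 := by
  have key := intervalIntegral.integral_eq_sub_of_hasDerivAt_of_le
      (f := fun s : ℝ => (Real.arcsin s + s * Real.sqrt (1 - s^2)) / 2)
      (f' := fun s : ℝ => Real.sqrt (1 - s^2)) (a := a) (b := 1) h2
      (by
        apply Continuous.continuousOn
        exact ((Real.continuous_arcsin.add
          (continuous_id.mul (Real.continuous_sqrt.comp (by fun_prop)))).div_const 2))
      (by
        intro x hx
        have hx1 : -1 < x := lt_of_le_of_lt h1 hx.1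
        have hx2 : x < 1 := hx.2
        have hpos : 0 < 1 - x^2 := by nlinarith
        have hsq : Real.sqrt (1 - x^2) ^ 2 = 1 - x^2 := Real.sq_sqrt hpos.le
        have d1 : HasDerivAt Real.arcsin (1 / Real.sqrt (1 - x^2)) x :=
          Real.hasDerivAt_arcsin (by linarith) (by linarith)
        have d2 : HasDerivAt (fun y : ℝ => 1 - y^2) (-(2*x)) x := by
          simpa using (hasDerivAt_pow 2 x).const_sub 1
        have d3 : HasDerivAt (fun y : ℝ => Real.sqrt (1 - y^2))
            (1 / (2 * Real.sqrt (1 - x^2)) * (-(2*x))) x :=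
          (Real.hasDerivAt_sqrt (by positivity)).comp x d2
        have d4 : HasDerivAt (fun y : ℝ => y * Real.sqrt (1 - y^2))
            (1 * Real.sqrt (1 - x^2) + x * (1 / (2 * Real.sqrt (1 - x^2)) * (-(2*x)))) x :=
          (hasDerivAt_id x).mul d3
        have d5 := (d1.add d4).div_const 2
        refine HasDerivAt.congr_deriv d5 ?_
        symm
        have hs0 : 0 < Real.sqrt (1 - x^2) := Real.sqrt_pos.mpr hpos
        field_simp
        nlinarith [hsq, hs0])
      (by apply Continuous.intervalIntegrable; fun_prop)
  rw [key]
  simp [Real.arcsin_one]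
  ring

lemma gfun_cont (l : ℝ) : Continuous (fun t : ℝ => Real.sqrt (1 - max (t^2) ((t+l)^2))) := by
  apply Real.continuous_sqrt.comp
  exact continuous_const.sub ((continuous_pow 2).max (by fun_prop))

lemma integral_gfun (l : ℝ) (hl0 : 0 < l) (hl2 : l ≤ 2) :
    ∫ t in (-1:ℝ)..(1-l), 2 * Real.sqrt (1 - max (t^2) ((t+l)^2)) =
      2 * (Real.arccos (l/2) - (l/2) * Real.sqrt (1 - l^2/4)) := by
  have hle1 : (-1:ℝ) ≤ -l/2 := by linarith
  have hle2 : (-l/2 : ℝ) ≤ 1 - l := by linarith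
  have hint : ∀ u v : ℝ, IntervalIntegrable
      (fun t : ℝ => 2 * Real.sqrt (1 - max (t^2) ((t+l)^2))) volume u v :=
    fun u v => (Continuous.intervalIntegrable (by exact continuous_const.mul (gfun_cont l)) u v)
  have hsplit := intervalIntegral.integral_add_adjacent_intervals
      (a := (-1:ℝ)) (b := -l/2) (c := 1-l) (hint _ _) (hint _ _)
  rw [← hsplit]
  have hK : ∫ s in (l/2)..1, 2 * Real.sqrt (1 - s^2)
      = π/2 - Real.arcsin (l/2) - (l/2) * Real.sqrt (1 - (l/2)^2) := by
    rw [intervalIntegral.integral_const_mul, sqrtFTC (l/2) (by linarith) (by linarith)]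
    ring
  have p1 : ∫ t in (-1:ℝ)..(-l/2), 2 * Real.sqrt (1 - max (t^2) ((t+l)^2))
      = ∫ s in (l/2)..1, 2 * Real.sqrt (1 - s^2) := by
    have e1 : ∫ t in (-1:ℝ)..(-l/2), 2 * Real.sqrt (1 - max (t^2) ((t+l)^2))
        = ∫ t in (-1:ℝ)..(-l/2), (fun s => 2 * Real.sqrt (1 - s^2)) (-t) := by
      apply intervalIntegral.integral_congr
      intro t ht
      rw [Set.uIcc_of_le hle1] at ht
      have h' : (t+l)^2 ≤ t^2 := by nlinarith [ht.1, ht.2]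
      simp only [max_eq_left h', neg_sq]
    rw [e1, intervalIntegral.integral_comp_neg (fun s => 2 * Real.sqrt (1 - s^2))]
    rw [show (-(-l/2) : ℝ) = l/2 by ring, show (-(-1:ℝ)) = 1 by ring]
  have p2 : ∫ t in (-l/2 : ℝ)..(1-l), 2 * Real.sqrt (1 - max (t^2) ((t+l)^2))
      = ∫ s in (l/2)..1, 2 * Real.sqrt (1 - s^2) := by
    have e1 : ∫ t in (-l/2:ℝ)..(1-l), 2 * Real.sqrt (1 - max (t^2) ((t+l)^2))
        = ∫ t in (-l/2:ℝ)..(1-l), (fun s => 2 * Real.sqrt (1 - s^2)) (t + l) := by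
      apply intervalIntegral.integral_congr
      intro t ht
      rw [Set.uIcc_of_le hle2] at ht
      have h' : t^2 ≤ (t+l)^2 := by nlinarith [ht.1, ht.2]
      simp only [max_eq_right h']
    rw [e1, intervalIntegral.integral_comp_add_right (fun s => 2 * Real.sqrt (1 - s^2)) l]
    rw [show (-l/2 + l : ℝ) = l/2 by ring, show (1 - l + l : ℝ) = 1 by ring]
  rw [p1, p2, hK, Real.arccos]
  have : (l/2)^2 = l^2/4 := by ring
  rw [this]
  ring

lemma norm_lt_one_iff (x : Plane) : ‖x‖ < 1 ↔ (x 0)^2 + (x 1)^2 < 1 := by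
  rw [EuclideanSpace.norm_eq]
  rw [show ∑ i, ‖x i‖^2 = (x 0)^2 + (x 1)^2 by simp [Fin.sum_univ_two, sq_abs]]
  rw [show (1:ℝ) = Real.sqrt 1 by simp]
  constructor
  · intro h; have := (Real.sqrt_lt_sqrt_iff (by positivity)).mp h; simpa using this
  · intro h; exact (Real.sqrt_lt_sqrt_iff (by positivity)).mpr (by simpa using h)

lemma volume_openLens (l : ℝ) (hl0 : 0 < l) (hl2 : l ≤ 2) :
    volume {x : Plane | ‖x‖ < 1 ∧ ‖x + l • needleDir 0‖ < 1} =
      ENNReal.ofReal (∫ t in (-1:ℝ)..(1-l), 2 * Real.sqrt (1 - max (t^2) ((t+l)^2))) := by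
  set g : ℝ → ℝ := fun t => Real.sqrt (1 - max (t^2) ((t+l)^2)) with hg
  have hgc : Continuous g := gfun_cont l
  set O₂ : Set (ℝ × ℝ) := regionBetween (fun t => -(g t)) g (Ioo (-1) (1-l)) with hO₂
  have hO₂m : MeasurableSet O₂ :=
    measurableSet_regionBetween (hgc.neg.measurable) hgc.measurable measurableSet_Ioo
  have hset : {x : Plane | ‖x‖ < 1 ∧ ‖x + l • needleDir 0‖ < 1} =
      (fun x : Plane => MeasurableEquiv.finTwoArrow ((MeasurableEquiv.toLp 2 (Fin 2 → ℝ)).symm x))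
        ⁻¹' O₂ := by
    ext x
    simp only [mem_setOf_eq, mem_preimage]
    have hc0 : (x + l • needleDir 0) 0 = x 0 + l := by simp [needleDir]
    have hc1 : (x + l • needleDir 0) 1 = x 1 := by simp [needleDir]
    rw [norm_lt_one_iff, norm_lt_one_iff, hc0, hc1]
    show _ ↔ (x 0, x 1) ∈ O₂
    simp only [hO₂, regionBetween, mem_setOf_eq, mem_Ioo]
    set a := x 0
    set b := x 1
    constructor
    · rintro ⟨h1, h2⟩
      have ha1 : -1 < a := by nlinarith [sq_nonneg b]
      have ha2 : a < 1 - l := by nlinarith [sq_nonneg b]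
      have hb : |b| < g a := by
        have : b^2 < 1 - max (a^2) ((a+l)^2) := by
          rcases max_cases (a^2) ((a+l)^2) with ⟨h, _⟩ | ⟨h, _⟩ <;> rw [h] <;> nlinarith
        calc |b| = Real.sqrt (b^2) := (Real.sqrt_sq_eq_abs b).symm
          _ < g a := Real.sqrt_lt_sqrt (sq_nonneg b) this
      exact ⟨⟨ha1, ha2⟩, abs_lt.mp hb⟩
    · rintro ⟨⟨ha1, ha2⟩, hb1, hb2⟩
      have hmax : max (a^2) ((a+l)^2) ≤ 1 := by
        rcases max_cases (a^2) ((a+l)^2) with ⟨h, _⟩ | ⟨h, _⟩ <;> rw [h] <;> nlinarith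
      have hb2' : b^2 < (g a)^2 := sq_lt_sq' hb1 hb2
      rw [hg] at hb2'
      rw [Real.sq_sqrt (by linarith)] at hb2'
      constructor
      · nlinarith [le_max_left (a^2) ((a+l)^2)]
      · nlinarith [le_max_right (a^2) ((a+l)^2)]
  have hmp : MeasurePreserving
      (fun x : Plane => MeasurableEquiv.finTwoArrow ((MeasurableEquiv.toLp 2 (Fin 2 → ℝ)).symm x))
      volume volume :=
    (volume_preserving_finTwoArrow ℝ).comp
      (EuclideanSpace.volume_preserving_symm_measurableEquiv_toLp (Fin 2))
  rw [hset, hmp.measure_preimage hO₂m.nullMeasurableSet]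
  have hvol : volume O₂ = ∫⁻ t in Ioo (-1:ℝ) (1-l), ENNReal.ofReal (2 * g t) := by
    rw [Measure.volume_eq_prod, hO₂,
      volume_regionBetween_eq_lintegral (f := fun t => -(g t)) (hgc.neg.measurable.aemeasurable)
        (hgc.measurable.aemeasurable) measurableSet_Ioo]
    congr 1
    funext t
    congr 1
    simp [two_mul]
  rw [hvol]
  rw [← ofReal_integral_eq_lintegral_ofReal]
  · rw [intervalIntegral.integral_of_le (by linarith : (-1:ℝ) ≤ 1 - l),
      integral_Ioc_eq_integral_Ioo]
  · exact ((continuous_const.mul hgc).integrableOn_Icc).mono_set Ioo_subset_Icc_self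
  · filter_upwards with t
    positivity

lemma volume_closedLens_zero (l : ℝ) (hl0 : 0 < l) (hl2 : l ≤ 2) :
    volume {x : Plane |
        x ∈ closedBall (0:Plane) 1 ∧ x + l • needleDir 0 ∈ closedBall (0:Plane) 1}
      = ENNReal.ofReal (∫ t in (-1:ℝ)..(1-l), 2 * Real.sqrt (1 - max (t^2) ((t+l)^2))) := by
  set O := {x : Plane | ‖x‖ < 1 ∧ ‖x + l • needleDir 0‖ < 1} with hO
  set S := {x : Plane |
      x ∈ closedBall (0:Plane) 1 ∧ x + l • needleDir 0 ∈ closedBall (0:Plane) 1} with hS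
  have hsub1 : O ⊆ S := by
    rintro x ⟨h1, h2⟩
    exact ⟨mem_closedBall_zero_iff.mpr h1.le, mem_closedBall_zero_iff.mpr h2.le⟩
  have hsub2 : S ⊆ O ∪ (sphere (0:Plane) 1 ∪ sphere (-(l • needleDir 0)) 1) := by
    rintro x ⟨h1, h2⟩
    rw [mem_closedBall_zero_iff] at h1 h2
    rcases lt_or_eq_of_le h1 with h1' | h1'
    · rcases lt_or_eq_of_le h2 with h2' | h2'
      · exact Or.inl ⟨h1', h2'⟩
      · refine Or.inr (Or.inr ?_)
        rw [mem_sphere_iff_norm, sub_neg_eq_add]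
        exact h2'
    · exact Or.inr (Or.inl (mem_sphere_zero_iff_norm.mpr h1'))
  have h0 : volume O = volume S := by
    apply le_antisymm (measure_mono hsub1)
    calc volume S ≤ volume (O ∪ (sphere (0:Plane) 1 ∪ sphere (-(l • needleDir 0)) 1)) :=
          measure_mono hsub2
      _ ≤ volume O + volume (sphere (0:Plane) 1 ∪ sphere (-(l • needleDir 0)) 1) :=
          measure_union_le _ _
      _ ≤ volume O + (volume (sphere (0:Plane) 1) + volume (sphere (-(l • needleDir 0)) 1)) := by
          gcongr; exact measure_union_le _ _
      _ = volume O := by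
          rw [Measure.addHaar_sphere volume, Measure.addHaar_sphere volume]; simp
  rw [← h0, volume_openLens l hl0 hl2]

lemma needleDir_zero : needleDir 0 = EuclideanSpace.single (0 : Fin 2) (1:ℝ) := by
  ext i; fin_cases i <;> simp [needleDir, EuclideanSpace.single_apply]

lemma volume_closedLens (l : ℝ) (hl0 : 0 < l) (hl2 : l ≤ 2) (θ : ℝ) :
    volume {x : Plane |
        x ∈ closedBall (0:Plane) 1 ∧ x + l • needleDir θ ∈ closedBall (0:Plane) 1}
      = ENNReal.ofReal (∫ t in (-1:ℝ)..(1-l), 2 * Real.sqrt (1 - max (t^2) ((t+l)^2))) := by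
  classical
  set v : Fin 2 → Plane := ![needleDir θ, needleDir (θ + π/2)] with hv
  have hon : Orthonormal ℝ v := by
    rw [orthonormal_iff_ite]
    intro i j
    fin_cases i <;> fin_cases j <;>
      simp [hv, needleDir, EuclideanSpace.norm_eq, PiLp.inner_apply, Fin.sum_univ_two, Real.cos_add, Real.sin_add] <;>
      nlinarith [Real.sin_sq_add_cos_sq θ]
  have hcard : Fintype.card (Fin 2) = Module.finrank ℝ Plane := by
    simp [finrank_euclideanSpace_fin]
  set B : OrthonormalBasis (Fin 2) ℝ Plane :=
    (basisOfOrthonormalOfCardEqFinrank hon hcard).toOrthonormalBasis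
      (by rwa [coe_basisOfOrthonormalOfCardEqFinrank]) with hB
  have hBapp : ∀ i, B i = v i := by
    intro i
    rw [hB, Module.Basis.coe_toOrthonormalBasis, coe_basisOfOrthonormalOfCardEqFinrank]
  set R : Plane ≃ₗᵢ[ℝ] Plane := B.repr.symm with hR
  have hkey : R (needleDir 0) = needleDir θ := by
    rw [needleDir_zero, hR, B.repr_symm_single 0, hBapp 0]
    simp [hv]
  have hpre : (⇑R) ⁻¹'
      {x : Plane | x ∈ closedBall (0:Plane) 1 ∧ x + l • needleDir θ ∈ closedBall (0:Plane) 1} =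
      {x : Plane | x ∈ closedBall (0:Plane) 1 ∧ x + l • needleDir 0 ∈ closedBall (0:Plane) 1} := by
    ext x
    simp only [mem_preimage, mem_setOf_eq, mem_closedBall_zero_iff]
    rw [R.norm_map]
    have : R x + l • needleDir θ = R (x + l • needleDir 0) := by
      rw [map_add, LinearIsometryEquiv.map_smul, hkey]
    rw [this, R.norm_map]
  have hmeas : MeasurableSet
      {x : Plane | x ∈ closedBall (0:Plane) 1 ∧ x + l • needleDir θ ∈ closedBall (0:Plane) 1} := by
    have h1 : {x : Plane |
        x ∈ closedBall (0:Plane) 1 ∧ x + l • needleDir θ ∈ closedBall (0:Plane) 1}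
        = closedBall (0:Plane) 1 ∩
          ((fun x : Plane => x + l • needleDir θ) ⁻¹' closedBall (0:Plane) 1) := rfl
    rw [h1]
    exact measurableSet_closedBall.inter ((measurable_id.add_const _) measurableSet_closedBall)
  rw [← (R.measurePreserving).measure_preimage hmeas.nullMeasurableSet, hpre,
    volume_closedLens_zero l hl0 hl2]

lemma needleDir_continuous : Continuous needleDir := by
  unfold needleDir
  refine (EuclideanSpace.equiv (Fin 2) ℝ).symm.continuous.comp ?_
  refine continuous_pi fun i => ?_
  fin_cases i <;> simp <;> fun_prop

end BuffonDiskAux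

/-- the Buffon probability of the closed unit disk. -/
theorem buffonProb_unitDisk (l : ℝ) (hl0 : 0 < l) (hl2 : l ≤ 2) :
    buffonProb (Metric.closedBall (0 : Plane) 1) l =
      (2 / π) * (Real.arccos (l / 2) - (l / 2) * Real.sqrt (1 - l ^ 2 / 4)) := by
  classical
  have hπ : (0:ℝ) < π := Real.pi_pos
  set D := Metric.closedBall (0:Plane) 1 with hD
  have hDvol : volume D = ENNReal.ofReal π := by
    rw [hD, EuclideanSpace.volume_closedBall]
    norm_num [Real.Gamma_two, Real.sq_sqrt Real.pi_nonneg]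
  have hDne : volume D ≠ 0 := by
    rw [hDvol]
    simp only [ne_eq, ENNReal.ofReal_eq_zero, not_le]
    exact hπ
  set Lint := ∫ t in (-1:ℝ)..(1-l), 2 * Real.sqrt (1 - max (t^2) ((t+l)^2)) with hLint
  have hLnn : 0 ≤ Lint := by
    rw [hLint]
    apply intervalIntegral.integral_nonneg (by linarith)
    intro t _
    positivity
  set T : Set (Plane × ℝ) := {p | p.1 + l • needleDir p.2 ∈ D} with hT
  have hTm : MeasurableSet T := by
    have h1 : T = (fun p : Plane × ℝ => p.1 + l • needleDir p.2) ⁻¹' D := rfl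
    rw [h1]
    have hcont : Continuous (fun p : Plane × ℝ => p.1 + l • needleDir p.2) :=
      continuous_fst.add ((needleDir_continuous.comp continuous_snd).const_smul l)
    exact hcont.measurable measurableSet_closedBall
  have step1 : ∀ x : Plane, volume (needleAngles D l x)
      = ∫⁻ θ in Ico 0 (2*π), T.indicator 1 (x, θ) := by
    intro x
    have hA : MeasurableSet ((fun θ : ℝ => (x, θ)) ⁻¹' T) := measurable_prodMk_left hTm
    have h1 : needleAngles D l x = ((fun θ : ℝ => (x, θ)) ⁻¹' T) ∩ Ico 0 (2*π) := by
      ext θ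
      simp only [needleAngles, hT, mem_setOf_eq, mem_inter_iff, mem_preimage, and_comm]
    rw [h1, ← Measure.restrict_apply hA, ← lintegral_indicator_one hA]
    exact lintegral_congr fun θ => by simp [Set.indicator_apply]
  have huncurry : Measurable
      (Function.uncurry fun (x : Plane) (θ : ℝ) => T.indicator (1 : Plane × ℝ → ℝ≥0∞) (x, θ)) := by
    have h1 : (Function.uncurry fun (x : Plane) (θ : ℝ) =>
        T.indicator (1 : Plane × ℝ → ℝ≥0∞) (x, θ)) = T.indicator 1 := rfl
    rw [h1]
    exact measurable_one.indicator hTm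
  have step2 : ∫⁻ x in D, volume (needleAngles D l x)
      = ENNReal.ofReal (2*π) * ENNReal.ofReal Lint := by
    calc ∫⁻ x in D, volume (needleAngles D l x)
        = ∫⁻ x in D, ∫⁻ θ in Ico 0 (2*π), T.indicator 1 (x, θ) :=
          lintegral_congr fun x => step1 x
      _ = ∫⁻ θ in Ico 0 (2*π), ∫⁻ x in D, T.indicator 1 (x, θ) :=
          lintegral_lintegral_swap huncurry.aemeasurable
      _ = ∫⁻ θ in Ico 0 (2*π), ENNReal.ofReal Lint := by
          refine lintegral_congr fun θ => ?_
          have hA : MeasurableSet ((fun x : Plane => (x, θ)) ⁻¹' T) :=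
            measurable_prodMk_right hTm
          have h1 : ∫⁻ x in D, T.indicator 1 (x, θ)
              = volume (((fun x : Plane => (x, θ)) ⁻¹' T) ∩ D) := by
            rw [← Measure.restrict_apply hA, ← lintegral_indicator_one hA]
            exact lintegral_congr fun y => by simp [Set.indicator_apply]
          rw [h1]
          have h2 : ((fun x : Plane => (x, θ)) ⁻¹' T) ∩ D
              = {x : Plane | x ∈ D ∧ x + l • needleDir θ ∈ D} := by
            ext x
            simp only [hT, mem_inter_iff, mem_preimage, mem_setOf_eq, and_comm]
          rw [h2, hLint, hD]
          exact volume_closedLens l hl0 hl2 θ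
      _ = ENNReal.ofReal (2*π) * ENNReal.ofReal Lint := by
          rw [setLIntegral_const, Real.volume_Ico, sub_zero, mul_comm]
  have haem : AEMeasurable (fun x => volume (needleAngles D l x)) (volume.restrict D) := by
    have h1 : (fun x => volume (needleAngles D l x))
        = fun x => ∫⁻ θ in Ico 0 (2*π), T.indicator 1 (x, θ) := funext step1
    rw [h1]
    exact (Measurable.lintegral_prod_right
      (f := fun (x : Plane) (θ : ℝ) => T.indicator 1 (x, θ)) huncurry).aemeasurable
  have hfin : ∀ᵐ x ∂(volume.restrict D), volume (needleAngles D l x) < ⊤ := by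
    filter_upwards with x
    have hsub : needleAngles D l x ⊆ Ico 0 (2*π) := fun θ hθ => hθ.1
    exact lt_of_le_of_lt (measure_mono hsub)
      (by rw [Real.volume_Ico]; exact ENNReal.ofReal_lt_top)
  have step3 : ∫ x in D, (volume (needleAngles D l x)).toReal = 2*π*Lint := by
    rw [integral_toReal haem hfin, step2, ← ENNReal.ofReal_mul (by positivity)]
    exact ENNReal.toReal_ofReal (by positivity)
  rw [buffonProb, if_neg hDne, step3, hDvol, ENNReal.toReal_ofReal Real.pi_nonneg]
  rw [hLint, integral_gfun l hl0 hl2]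
  field_simp
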